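/- For a uniformly random matching on [2n], the expected average number of socks on the floor, E[(1/(2n)) Σ_{k=1}^{2n} X_k], equals (2n+1)/6. -/

import Mathlib

open Finset
open scoped Classical

/-- An `r`-matching on `[r*n] = {1,...,r*n}`: a partition of `Finset.Icc 1 (r*n)`
into `r`-element blocks. -/
def IsRMatching (r n : ℕ) (M : Finset (Finset ℕ)) : Prop :=
  (∀ e ∈ M, e.card = r) ∧
  (∀ e ∈ M, ∀ f ∈ M, e ≠ f → Disjoint e f) ∧
  M.biUnion id = Finset.Icc 1 (r * n)

/-- The finite set of all `r`-matchings on `[r*n]`. -/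
noncomputable def matchings (r n : ℕ) : Finset (Finset (Finset ℕ)) :=
  ((Finset.Icc 1 (r * n)).powerset.powerset).filter (IsRMatching r n)

/-- `x_k(M) = Σ_{e ∈ M_k} |e ∩ [k]|`, summed over blocks `e` meeting both `[k]`
and its complement. -/
noncomputable def sockAt (k : ℕ) (M : Finset (Finset ℕ)) : ℕ :=
  ∑ e ∈ M.filter
      (fun e => (e ∩ Finset.Icc 1 k).Nonempty ∧ (e \ Finset.Icc 1 k).Nonempty),
    (e ∩ Finset.Icc 1 k).card

/-- For `r = 2`: the number of edges with one endpoint in `[k]` and one outside. -/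
noncomputable def crossAt (k : ℕ) (M : Finset (Finset ℕ)) : ℕ :=
  (M.filter
      (fun e => (e ∩ Finset.Icc 1 k).Nonempty ∧ (e \ Finset.Icc 1 k).Nonempty)).card

/-- The sock number of a matching on `[2n]`: `max_{1 ≤ k ≤ 2n} x_k(M)`. -/
noncomputable def sockNum (n : ℕ) (M : Finset (Finset ℕ)) : ℕ :=
  (Finset.Icc 1 (2 * n)).sup (fun k => crossAt k M)

lemma mem_matchings {r n : ℕ} {M : Finset (Finset ℕ)} :
    M ∈ matchings r n ↔ IsRMatching r n M := by
  unfold matchings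
  simp only [mem_filter, mem_powerset, and_iff_right_iff_imp]
  intro h
  intro e he
  simp only [mem_powerset]
  calc e ⊆ M.biUnion id := Finset.subset_biUnion_of_mem id he
    _ = Finset.Icc 1 (r * n) := h.2.2

lemma edge_subset {r n : ℕ} {M : Finset (Finset ℕ)} (h : IsRMatching r n M)
    {e : Finset ℕ} (he : e ∈ M) : e ⊆ Finset.Icc 1 (r * n) := by
  calc e ⊆ M.biUnion id := Finset.subset_biUnion_of_mem id he
    _ = Finset.Icc 1 (r * n) := h.2.2

lemma card_matching {n : ℕ} {M : Finset (Finset ℕ)} (h : IsRMatching 2 n M) :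
    M.card = n := by
  have h1 : (M.biUnion id).card = ∑ e ∈ M, (id e).card :=
    Finset.card_biUnion (fun e he f hf hef => h.2.1 e he f hf hef)
  rw [h.2.2] at h1
  rw [Nat.card_Icc] at h1
  have h2 : ∑ e ∈ M, (id e).card = ∑ e ∈ M, 2 :=
    Finset.sum_congr rfl (fun e he => h.1 e he)
  rw [h2, Finset.sum_const, smul_eq_mul] at h1
  omega

lemma image_S {n : ℕ} (σ : Equiv.Perm ℕ)
    (hσ : ∀ x ∈ Finset.Icc 1 (2*n), σ x ∈ Finset.Icc 1 (2*n)) :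
    (Finset.Icc 1 (2*n)).image σ = Finset.Icc 1 (2*n) := by
  apply Finset.eq_of_subset_of_card_le
  · intro x hx
    simp only [mem_image] at hx
    obtain ⟨y, hy, rfl⟩ := hx
    exact hσ y hy
  · rw [Finset.card_image_of_injective _ σ.injective]

lemma inv_S {n : ℕ} (σ : Equiv.Perm ℕ)
    (hσ : ∀ x ∈ Finset.Icc 1 (2*n), σ x ∈ Finset.Icc 1 (2*n)) :
    ∀ x ∈ Finset.Icc 1 (2*n), σ⁻¹ x ∈ Finset.Icc 1 (2*n) := by
  intro x hx
  rw [← image_S σ hσ] at hx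
  simp only [mem_image] at hx
  obtain ⟨y, hy, rfl⟩ := hx
  simpa using hy

lemma matchings_image {n : ℕ} (σ : Equiv.Perm ℕ)
    (hσ : ∀ x ∈ Finset.Icc 1 (2*n), σ x ∈ Finset.Icc 1 (2*n))
    {M : Finset (Finset ℕ)} (h : M ∈ matchings 2 n) :
    M.image (fun e => e.image σ) ∈ matchings 2 n := by
  rw [mem_matchings] at h ⊢
  obtain ⟨hcard, hdisj, hcover⟩ := h
  refine ⟨?_, ?_, ?_⟩
  · intro e' he'
    simp only [mem_image] at he'
    obtain ⟨e, he, rfl⟩ := he'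
    rw [Finset.card_image_of_injective _ σ.injective]
    exact hcard e he
  · intro e' he' f' hf' hne
    simp only [mem_image] at he' hf'
    obtain ⟨e, he, rfl⟩ := he'
    obtain ⟨f, hf, rfl⟩ := hf'
    have hef : e ≠ f := by rintro rfl; exact hne rfl
    rw [Finset.disjoint_image σ.injective]
    exact hdisj e he f hf hef
  · have key : (M.image (fun e => e.image σ)).biUnion id = (M.biUnion id).image σ := by
      ext x
      simp only [mem_biUnion, mem_image, id_eq]
      constructor
      · rintro ⟨e', ⟨e, he, rfl⟩, hx⟩
        simp only [mem_image] at hx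
        obtain ⟨y, hy, rfl⟩ := hx
        exact ⟨y, ⟨e, he, hy⟩, rfl⟩
      · rintro ⟨y, ⟨e, he, hy⟩, rfl⟩
        exact ⟨e.image σ, ⟨e, he, rfl⟩, Finset.mem_image_of_mem _ hy⟩
    rw [key, hcover]
    exact image_S σ hσ

lemma T_perm {n : ℕ} (σ : Equiv.Perm ℕ)
    (hσ : ∀ x ∈ Finset.Icc 1 (2*n), σ x ∈ Finset.Icc 1 (2*n)) (i j : ℕ) :
    ((matchings 2 n).filter (fun M => ({i, j} : Finset ℕ) ∈ M)).card =
    ((matchings 2 n).filter (fun M => ({σ i, σ j} : Finset ℕ) ∈ M)).card := by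
  apply Finset.card_bij (fun M _ => M.image (fun e => e.image σ))
  · intro M hM
    simp only [mem_filter] at hM ⊢
    refine ⟨matchings_image σ hσ hM.1, ?_⟩
    have : ({σ i, σ j} : Finset ℕ) = ({i, j} : Finset ℕ).image σ := by
      simp [Finset.image_insert]
    rw [this]
    exact Finset.mem_image_of_mem _ hM.2
  · intro M hM M' hM' heq
    exact Finset.image_injective (Finset.image_injective σ.injective) heq
  · intro M' hM'
    simp only [mem_filter] at hM'
    refine ⟨M'.image (fun e => e.image (σ⁻¹ : Equiv.Perm ℕ)), ?_, ?_⟩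
    · simp only [mem_filter]
      refine ⟨matchings_image σ⁻¹ (inv_S σ hσ) hM'.1, ?_⟩
      have : ({i, j} : Finset ℕ) = ({σ i, σ j} : Finset ℕ).image (σ⁻¹ : Equiv.Perm ℕ) := by
        simp [Finset.image_insert]
      rw [this]
      exact Finset.mem_image_of_mem _ hM'.2
    · rw [Finset.image_image]
      have : ((fun e => Finset.image (⇑σ) e) ∘ fun e => Finset.image (⇑σ⁻¹) e) = id := by
        funext e
        simp only [Function.comp_apply, Finset.image_image, id_eq]
        have : (⇑σ ∘ ⇑σ⁻¹) = id := by
          funext x; simp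
        rw [this, Finset.image_id]
      rw [this, Finset.image_id]

lemma swap_S {n : ℕ} {a b : ℕ} (ha : a ∈ Finset.Icc 1 (2*n)) (hb : b ∈ Finset.Icc 1 (2*n)) :
    ∀ x ∈ Finset.Icc 1 (2*n), Equiv.swap a b x ∈ Finset.Icc 1 (2*n) := by
  intro x hx
  rcases eq_or_ne x a with rfl | hxa
  · rw [Equiv.swap_apply_left]; exact hb
  rcases eq_or_ne x b with rfl | hxb
  · rw [Equiv.swap_apply_right]; exact ha
  · rw [Equiv.swap_apply_of_ne_of_ne hxa hxb]; exact hx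

lemma T_const {n : ℕ} {i j i' j' : ℕ}
    (hi : i ∈ Finset.Icc 1 (2*n)) (hj : j ∈ Finset.Icc 1 (2*n))
    (hi' : i' ∈ Finset.Icc 1 (2*n)) (hj' : j' ∈ Finset.Icc 1 (2*n))
    (hij : i ≠ j) (hij' : i' ≠ j') :
    ((matchings 2 n).filter (fun M => ({i, j} : Finset ℕ) ∈ M)).card =
    ((matchings 2 n).filter (fun M => ({i', j'} : Finset ℕ) ∈ M)).card := by
  set σ₁ := Equiv.swap i i' with hσ₁
  set j₁ := σ₁ j with hj₁def
  set σ₂ := Equiv.swap j₁ j' with hσ₂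
  have hσ₁S : ∀ x ∈ Finset.Icc 1 (2*n), σ₁ x ∈ Finset.Icc 1 (2*n) := swap_S hi hi'
  have hj₁S : j₁ ∈ Finset.Icc 1 (2*n) := hσ₁S j hj
  have hσ₂S : ∀ x ∈ Finset.Icc 1 (2*n), σ₂ x ∈ Finset.Icc 1 (2*n) := swap_S hj₁S hj'
  set σ := σ₁.trans σ₂ with hσdef
  have hσS : ∀ x ∈ Finset.Icc 1 (2*n), σ x ∈ Finset.Icc 1 (2*n) := by
    intro x hx
    exact hσ₂S _ (hσ₁S x hx)
  have hj₁ne : j₁ ≠ i' := by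
    rw [hj₁def, hσ₁]
    intro hh
    have : j = σ₁⁻¹ i' := by rw [← hh]; simp [hσ₁]
    rw [hσ₁] at this
    simp only [Equiv.swap_inv, Equiv.swap_apply_right] at this
    exact hij this.symm
  have hσi : σ i = i' := by
    rw [hσdef]
    simp only [Equiv.trans_apply]
    rw [hσ₁, Equiv.swap_apply_left, hσ₂]
    exact Equiv.swap_apply_of_ne_of_ne hj₁ne.symm hij'
  have hσj : σ j = j' := by
    rw [hσdef]
    simp only [Equiv.trans_apply]
    rw [← hj₁def, hσ₂, Equiv.swap_apply_left]
  calc ((matchings 2 n).filter (fun M => ({i, j} : Finset ℕ) ∈ M)).card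
      = ((matchings 2 n).filter (fun M => ({σ i, σ j} : Finset ℕ) ∈ M)).card :=
        T_perm σ hσS i j
    _ = ((matchings 2 n).filter (fun M => ({i', j'} : Finset ℕ) ∈ M)).card := by
        rw [hσi, hσj]

lemma crossAt_eq {n : ℕ} {M : Finset (Finset ℕ)} (h : IsRMatching 2 n M) (k : ℕ) :
    crossAt k M =
      ((Finset.Icc 1 k ×ˢ Finset.Icc (k+1) (2*n)).filter
        (fun p => ({p.1, p.2} : Finset ℕ) ∈ M)).card := by
  unfold crossAt
  symm
  apply Finset.card_bij (fun p _ => ({p.1, p.2} : Finset ℕ))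
  · rintro ⟨a, b⟩ hp
    simp only [mem_filter, mem_product, mem_Icc] at hp
    obtain ⟨⟨⟨ha1, ha2⟩, hb1, hb2⟩, hm⟩ := hp
    simp only [mem_filter]
    refine ⟨hm, ⟨a, ?_⟩, ⟨b, ?_⟩⟩
    · simp only [mem_inter, mem_Icc, mem_insert, mem_singleton]
      exact ⟨by simp, ha1, ha2⟩
    · simp only [mem_sdiff, mem_Icc, mem_insert, mem_singleton]
      exact ⟨by simp, by omega⟩
  · rintro ⟨a, b⟩ hp ⟨a', b'⟩ hp' heq
    simp only [mem_filter, mem_product, mem_Icc] at hp hp'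
    have ha' : a' ∈ ({a, b} : Finset ℕ) := by rw [heq]; simp
    have hb' : b' ∈ ({a, b} : Finset ℕ) := by rw [heq]; simp
    simp only [mem_insert, mem_singleton] at ha' hb'
    obtain ⟨h1, h2⟩ : a' = a ∧ b' = b := by omega
    subst h1; subst h2; rfl
  · intro e he
    simp only [mem_filter] at he
    obtain ⟨hm, ⟨a, ha⟩, ⟨b, hb⟩⟩ := he
    simp only [mem_inter, mem_Icc] at ha
    simp only [mem_sdiff, mem_Icc] at hb
    have hab : a ≠ b := by
      intro hh; subst hh; exact hb.2 ⟨ha.2.1, ha.2.2⟩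
    have hsub : ({a, b} : Finset ℕ) ⊆ e := by
      intro x hx; simp only [mem_insert, mem_singleton] at hx
      rcases hx with rfl | rfl
      exacts [ha.1, hb.1]
    have hcard : ({a, b} : Finset ℕ).card = 2 := Finset.card_pair hab
    have hee : e = {a, b} := by
      apply (Finset.eq_of_subset_of_card_le hsub ?_).symm
      rw [hcard, h.1 e hm]
    have hbS : b ∈ Finset.Icc 1 (2 * n) := edge_subset h hm hb.1
    simp only [mem_Icc] at hbS
    refine ⟨(a, b), ?_, hee.symm⟩
    simp only [mem_filter, mem_product, mem_Icc]
    exact ⟨⟨⟨ha.2.1, ha.2.2⟩, by omega, hbS.2⟩, hee ▸ hm⟩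

lemma pairs_card {n : ℕ} {M : Finset (Finset ℕ)} (h : IsRMatching 2 n M) :
    ((Finset.Icc 1 (2*n) ×ˢ Finset.Icc 1 (2*n)).filter
      (fun p => p.1 < p.2 ∧ ({p.1, p.2} : Finset ℕ) ∈ M)).card = M.card := by
  apply Finset.card_bij (fun p _ => ({p.1, p.2} : Finset ℕ))
  · rintro ⟨a, b⟩ hp
    simp only [mem_filter] at hp
    exact hp.2.2
  · rintro ⟨a, b⟩ hp ⟨a', b'⟩ hp' heq
    simp only [mem_filter, mem_product, mem_Icc] at hp hp'
    have ha' : a' ∈ ({a, b} : Finset ℕ) := by rw [heq]; simp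
    have hb' : b' ∈ ({a, b} : Finset ℕ) := by rw [heq]; simp
    have ha : a ∈ ({a', b'} : Finset ℕ) := by rw [← heq]; simp
    simp only [mem_insert, mem_singleton] at ha' hb' ha
    have h1 := hp.2.1
    have h2 := hp'.2.1
    obtain ⟨h3, h4⟩ : a' = a ∧ b' = b := by omega
    subst h3; subst h4; rfl
  · intro e he
    obtain ⟨a, b, hab, rfl⟩ := Finset.card_eq_two.mp (h.1 e he)
    have haS : a ∈ Finset.Icc 1 (2 * n) := edge_subset h he (by simp)
    have hbS : b ∈ Finset.Icc 1 (2 * n) := edge_subset h he (by simp)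
    simp only [mem_Icc] at haS hbS
    rcases Nat.lt_or_ge a b with hlt | hge
    · refine ⟨(a, b), ?_, rfl⟩
      simp only [mem_filter, mem_product, mem_Icc]
      exact ⟨⟨⟨haS.1, haS.2⟩, hbS.1, hbS.2⟩, hlt, he⟩
    · have hlt : b < a := by omega
      refine ⟨(b, a), ?_, ?_⟩
      · simp only [mem_filter, mem_product, mem_Icc]
        refine ⟨⟨⟨hbS.1, hbS.2⟩, haS.1, haS.2⟩, hlt, ?_⟩
        rwa [Finset.pair_comm]
      · rw [Finset.pair_comm]

lemma matchings_nonempty (n : ℕ) : (matchings 2 n).Nonempty := by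
  refine ⟨(Finset.range n).image (fun i => ({2*i+1, 2*i+2} : Finset ℕ)), ?_⟩
  rw [mem_matchings]
  refine ⟨?_, ?_, ?_⟩
  · intro e he
    simp only [mem_image] at he
    obtain ⟨i, hi, rfl⟩ := he
    rw [Finset.card_pair (by omega)]
  · intro e he f hf hne
    simp only [mem_image] at he hf
    obtain ⟨i, hi, rfl⟩ := he
    obtain ⟨i', hi', rfl⟩ := hf
    have : i ≠ i' := by rintro rfl; exact hne rfl
    rw [Finset.disjoint_left]
    intro x hx hx'
    simp only [mem_insert, mem_singleton] at hx hx'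
    omega
  · ext x
    simp only [mem_biUnion, mem_image, id_eq, mem_Icc]
    constructor
    · rintro ⟨e, ⟨i, hi, rfl⟩, hx⟩
      simp only [mem_range] at hi
      simp only [mem_insert, mem_singleton] at hx
      omega
    · intro hx
      refine ⟨{2*((x-1)/2)+1, 2*((x-1)/2)+2}, ⟨(x-1)/2, ?_, rfl⟩, ?_⟩
      · simp only [mem_range]; omega
      · simp only [mem_insert, mem_singleton]; omega

lemma gauss1 (m : ℕ) : ∑ k ∈ Finset.range m, (k : ℚ) = m * (m - 1) / 2 := by
  induction m with
  | zero => simp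
  | succ m ih => rw [Finset.sum_range_succ, ih]; push_cast; ring

lemma gauss2 (m : ℕ) : ∑ k ∈ Finset.range m, (k : ℚ)^2 = m * (m - 1) * (2*m - 1) / 6 := by
  induction m with
  | zero => simp
  | succ m ih => rw [Finset.sum_range_succ, ih]; push_cast; ring

lemma Icc_sum_eq_range {f : ℕ → ℚ} (hf : f 0 = 0) (m : ℕ) :
    ∑ k ∈ Finset.Icc 1 m, f k = ∑ k ∈ Finset.range (m+1), f k := by
  apply Finset.sum_subset
  · intro x hx
    simp only [mem_Icc] at hx
    simp only [mem_range]
    omega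
  · intro x hx hx'
    simp only [mem_range] at hx
    simp only [mem_Icc] at hx'
    have : x = 0 := by omega
    rw [this, hf]

lemma cross_sum (n : ℕ) :
    ∑ k ∈ Finset.Icc 1 (2*n), (k : ℚ) * (2*n - k) = n * (2*n+1) * (2*n - 1) / 3 := by
  have h0 : ((0:ℕ) : ℚ) * (2*n - (0:ℕ)) = 0 := by simp
  rw [Icc_sum_eq_range (f := fun k => (k : ℚ) * (2*n - k)) (by simp)]
  have : ∀ k : ℕ, (k : ℚ) * (2*n - k) = 2*n*(k:ℚ) - (k:ℚ)^2 := by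
    intro k; ring
  simp only [this]
  rw [Finset.sum_sub_distrib, ← Finset.mul_sum, gauss1, gauss2]
  push_cast
  ring

theorem stmt10 (n : ℕ) (hn : 1 ≤ n) :
    (∑ M ∈ matchings 2 n,
        (∑ k ∈ Finset.Icc 1 (2 * n), (crossAt k M : ℚ)) / (2 * n)) /
        (matchings 2 n).card =
      (2 * n + 1) / 6 := by
  have h1S : (1 : ℕ) ∈ Finset.Icc 1 (2*n) := by simp; omega
  have h2S : (2 : ℕ) ∈ Finset.Icc 1 (2*n) := by simp; omega
  set t := ((matchings 2 n).filter (fun M => ({1, 2} : Finset ℕ) ∈ M)).card with ht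
  set N := (matchings 2 n).card with hN
  have Tsum : ∀ i j : ℕ,
      ((matchings 2 n).filter (fun M => ({i, j} : Finset ℕ) ∈ M)).card
        = ∑ M ∈ matchings 2 n, if ({i, j} : Finset ℕ) ∈ M then 1 else 0 :=
    fun i j => Finset.card_filter _ _
  -- Step 1: Pcard * t = n * N
  set P := (Finset.Icc 1 (2*n) ×ˢ Finset.Icc 1 (2*n)).filter (fun p => p.1 < p.2) with hP
  have step1 : P.card * t = n * N := by
    have e1 : ∑ p ∈ P,
        ((matchings 2 n).filter (fun M => ({p.1, p.2} : Finset ℕ) ∈ M)).card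
        = P.card * t := by
      have hconst : ∀ p ∈ P,
          ((matchings 2 n).filter (fun M => ({p.1, p.2} : Finset ℕ) ∈ M)).card = t := by
        intro p hp
        simp only [hP, mem_filter, mem_product] at hp
        exact T_const hp.1.1 hp.1.2 h1S h2S (Nat.ne_of_lt hp.2) (by omega)
      rw [Finset.sum_congr rfl hconst, Finset.sum_const, smul_eq_mul]
    have e2 : ∑ p ∈ P,
        ((matchings 2 n).filter (fun M => ({p.1, p.2} : Finset ℕ) ∈ M)).card
        = n * N := by
      calc ∑ p ∈ P, ((matchings 2 n).filter (fun M => ({p.1, p.2} : Finset ℕ) ∈ M)).card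
          = ∑ p ∈ P, ∑ M ∈ matchings 2 n, (if ({p.1, p.2} : Finset ℕ) ∈ M then 1 else 0) :=
            Finset.sum_congr rfl (fun p _ => Tsum p.1 p.2)
        _ = ∑ M ∈ matchings 2 n, ∑ p ∈ P, (if ({p.1, p.2} : Finset ℕ) ∈ M then 1 else 0) :=
            Finset.sum_comm
        _ = ∑ M ∈ matchings 2 n, (P.filter (fun p => ({p.1, p.2} : Finset ℕ) ∈ M)).card :=
            Finset.sum_congr rfl (fun M _ => (Finset.card_filter _ _).symm)
        _ = ∑ M ∈ matchings 2 n, n := by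
            refine Finset.sum_congr rfl (fun M hM => ?_)
            have hMm := mem_matchings.mp hM
            rw [hP, Finset.filter_filter, pairs_card hMm, card_matching hMm]
        _ = n * N := by rw [Finset.sum_const, smul_eq_mul, mul_comm]
    rw [← e1, e2]
  -- Pcard in ℚ
  have Pcard : (P.card : ℚ) = n * (2*n - 1) := by
    have c1 : P.card = ∑ i ∈ Finset.Icc 1 (2*n), (2*n - i) := by
      rw [hP, Finset.card_filter, Finset.sum_product]
      refine Finset.sum_congr rfl (fun i hi => ?_)
      rw [← Finset.card_filter]
      have : (Finset.Icc 1 (2*n)).filter (fun j => i < j) = Finset.Icc (i+1) (2*n) := by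
        ext x; simp only [mem_filter, mem_Icc]; omega
      rw [this, Nat.card_Icc]
      omega
    rw [c1]
    push_cast [Nat.cast_sum]
    have cast_sub : ∀ i ∈ Finset.Icc 1 (2*n), ((2*n - i : ℕ) : ℚ) = 2*n - (i:ℚ) := by
      intro i hi
      simp only [mem_Icc] at hi
      push_cast [Nat.cast_sub hi.2]
      ring
    rw [Finset.sum_congr rfl cast_sub, Finset.sum_sub_distrib, Finset.sum_const,
      Nat.card_Icc]
    rw [Icc_sum_eq_range (f := fun i => (i : ℚ)) (by simp), gauss1]
    push_cast
    have : (1:ℚ) ≤ n := by exact_mod_cast hn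
    field_simp
    ring
  -- Step 2: per-k sum
  have key : ∀ k ∈ Finset.Icc 1 (2*n),
      ∑ M ∈ matchings 2 n, crossAt k M
        = ((Finset.Icc 1 k ×ˢ Finset.Icc (k+1) (2*n)).card) * t := by
    intro k hk
    simp only [mem_Icc] at hk
    set A := Finset.Icc 1 k ×ˢ Finset.Icc (k+1) (2*n) with hA
    calc ∑ M ∈ matchings 2 n, crossAt k M
        = ∑ M ∈ matchings 2 n,
            (A.filter (fun p => ({p.1, p.2} : Finset ℕ) ∈ M)).card :=
          Finset.sum_congr rfl (fun M hM => crossAt_eq (mem_matchings.mp hM) k)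
      _ = ∑ M ∈ matchings 2 n, ∑ p ∈ A, (if ({p.1, p.2} : Finset ℕ) ∈ M then 1 else 0) :=
          Finset.sum_congr rfl (fun M _ => Finset.card_filter _ _)
      _ = ∑ p ∈ A, ∑ M ∈ matchings 2 n, (if ({p.1, p.2} : Finset ℕ) ∈ M then 1 else 0) :=
          Finset.sum_comm
      _ = ∑ p ∈ A,
            ((matchings 2 n).filter (fun M => ({p.1, p.2} : Finset ℕ) ∈ M)).card :=
          Finset.sum_congr rfl (fun p _ => (Tsum p.1 p.2).symm)
      _ = ∑ p ∈ A, t := by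
          refine Finset.sum_congr rfl (fun p hp => ?_)
          simp only [hA, mem_product, mem_Icc] at hp
          exact T_const (by simp only [mem_Icc]; omega) (by simp only [mem_Icc]; omega)
            h1S h2S (by omega) (by omega)
      _ = A.card * t := by rw [Finset.sum_const, smul_eq_mul]
  -- ℚ facts
  have hNpos : 0 < N := Finset.card_pos.mpr (matchings_nonempty n)
  have hNne : (N : ℚ) ≠ 0 := by positivity
  have hnQ : (1:ℚ) ≤ (n:ℚ) := by exact_mod_cast hn
  have hnne : (n : ℚ) ≠ 0 := by positivity
  have step1Q : (2*(n:ℚ) - 1) * t = N := by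
    have := congrArg (fun x : ℕ => (x : ℚ)) step1
    push_cast at this
    rw [Pcard] at this
    have h2 : (n:ℚ) * ((2*n-1) * t) = (n:ℚ) * N := by rw [← this]; ring
    exact mul_left_cancel₀ hnne h2
  have htne : (t : ℚ) ≠ 0 := by
    intro h
    rw [h, mul_zero] at step1Q
    exact hNne step1Q.symm
  have h2n1 : (2*(n:ℚ) - 1) ≠ 0 := by nlinarith
  -- assemble
  rw [← Finset.sum_div]
  have main : ∑ M ∈ matchings 2 n, ∑ k ∈ Finset.Icc 1 (2*n), (crossAt k M : ℚ)
      = (n * (2*n+1) * (2*n - 1) / 3) * t := by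
    rw [Finset.sum_comm]
    have e3 : ∀ k ∈ Finset.Icc 1 (2*n),
        ∑ M ∈ matchings 2 n, (crossAt k M : ℚ) = (k:ℚ) * (2*n - (k:ℚ)) * t := by
      intro k hk
      simp only [mem_Icc] at hk
      rw [← Nat.cast_sum, key k (by simp only [mem_Icc]; omega)]
      rw [Finset.card_product, Nat.card_Icc, Nat.card_Icc]
      have hsub : 2*n + 1 - (k+1) = 2*n - k := by omega
      have hsub2 : 1 + 1 - 1 = 1 := by omega
      rw [hsub]
      push_cast [Nat.cast_sub (show k ≤ 2*n by omega)]
      ring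
    rw [Finset.sum_congr rfl e3]
    have : ∀ k ∈ Finset.Icc 1 (2*n),
        (k:ℚ) * (2*(n:ℚ) - (k:ℚ)) * t = ((k:ℚ) * (2*(n:ℚ) - (k:ℚ))) * t := by
      intro k _; ring
    rw [← Finset.sum_mul]
    rw [cross_sum n]
  rw [main, ← step1Q]
  rw [div_div, div_eq_div_iff (mul_ne_zero (by positivity) (mul_ne_zero h2n1 htne)) (by norm_num)]
  ring
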